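/- Let N ≥ 2, let π₀ lie in the interior of the probability simplex in ℝ^N, let τ > 0 and q̄ ∈ ℝ^N. Define Φ(π) = ⟨π, q̄⟩ − τ·KL(π‖π₀) − ψ(π) on the interior of the simplex, where ψ(π) = max(0, max_{i∈[N]} (−τ·log(π_i/(π₀)_i))). Then Φ tends to −∞ at the boundary of the simplex: for every sequence (π^{(k)}) in the interior of the simplex with min_{i∈[N]} π^{(k)}_i → 0 as k → ∞, one has Φ(π^{(k)}) → −∞. -/
import Mathlib


open Finset

/-- Kullback–Leibler divergence between two vectors in the interior of the simplex. -/
noncomputable def KL {N : ℕ} (π π₀ : Fin N → ℝ) : ℝ :=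
  ∑ i, π i * Real.log (π i / π₀ i)

/-- Minimal implementation cost `ψ(π) = max(0, max_i (−τ log(π_i/(π₀)_i)))`. -/
noncomputable def psi {N : ℕ} (τ : ℝ) (π₀ π : Fin N → ℝ) : ℝ :=
  max 0 (⨆ i, -τ * Real.log (π i / π₀ i))

/-- The aggregate-surplus potential `Φ(π) = ⟨π, q̄⟩ − τ·KL(π‖π₀) − ψ(π)`. -/
noncomputable def Phi {N : ℕ} (τ : ℝ) (π₀ qbar π : Fin N → ℝ) : ℝ :=
  (∑ i, π i * qbar i) - τ * KL π π₀ - psi τ π₀ π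

/-- Gibbs' inequality: the KL divergence is nonnegative on the simplex. -/
lemma KL_nonneg {N : ℕ} (π π₀ : Fin N → ℝ) (hπ : ∀ i, 0 < π i) (hπs : ∑ i, π i = 1)
    (hπ₀ : ∀ i, 0 < π₀ i) (hπ₀s : ∑ i, π₀ i = 1) : 0 ≤ KL π π₀ := by
  have key : ∀ i, π i - π₀ i ≤ π i * Real.log (π i / π₀ i) := by
    intro i
    have hr : 0 < π i / π₀ i := div_pos (hπ i) (hπ₀ i)
    have h1 : 1 - (π i / π₀ i)⁻¹ ≤ Real.log (π i / π₀ i) :=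
      Real.one_sub_inv_le_log_of_pos hr
    have h2 : π i * (1 - (π i / π₀ i)⁻¹) ≤ π i * Real.log (π i / π₀ i) :=
      mul_le_mul_of_nonneg_left h1 (hπ i).le
    have h3 : π i * (1 - (π i / π₀ i)⁻¹) = π i - π₀ i := by
      rw [inv_div, mul_sub, mul_one, mul_div_cancel₀ _ (hπ i).ne']
    linarith
  have : ∑ i, (π i - π₀ i) ≤ ∑ i, π i * Real.log (π i / π₀ i) :=
    Finset.sum_le_sum (fun i _ => key i)
  rw [Finset.sum_sub_distrib, hπs, hπ₀s] at this
  unfold KL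
  linarith

theorem exists_eq_iInf {N : ℕ} (hN : 0 < N) (f : Fin N → ℝ) :
    ∃ j, (⨅ i, f i) = f j ∧ ∀ i, f j ≤ f i := by
  haveI : Nonempty (Fin N) := ⟨⟨0, hN⟩⟩
  obtain ⟨j, hj⟩ := Finite.exists_min f
  exact ⟨j, le_antisymm (ciInf_le (Finite.bddBelow_range f) j) (le_ciInf hj), hj⟩

/-- `Φ` tends to `−∞` at the boundary of the simplex: along any sequence in the
interior of the simplex whose minimal coordinate tends to `0`, `Φ` tends to `−∞`. -/
theorem stmt_2 (N : ℕ) (hN : 2 ≤ N) (π₀ : Fin N → ℝ)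
    (hπ₀pos : ∀ i, 0 < π₀ i) (hπ₀sum : ∑ i, π₀ i = 1)
    (τ : ℝ) (hτ : 0 < τ) (qbar : Fin N → ℝ)
    (πk : ℕ → Fin N → ℝ)
    (hmem : ∀ k, (∀ i, 0 < πk k i) ∧ ∑ i, πk k i = 1)
    (hmin : Filter.Tendsto (fun k => ⨅ i, πk k i) Filter.atTop (nhds 0)) :
    Filter.Tendsto (fun k => Phi τ π₀ qbar (πk k)) Filter.atTop Filter.atBot := by
  have hNpos : 0 < N := by omega
  haveI : Nonempty (Fin N) := ⟨⟨0, hNpos⟩⟩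
  set m₀ : ℝ := ⨅ i, π₀ i with hm₀
  set C : ℝ := (∑ i, |qbar i|) - τ * Real.log m₀ with hC
  -- the dominating sequence
  set g : ℕ → ℝ := fun k => C + τ * Real.log (⨅ i, πk k i) with hg
  have hinfpos : ∀ k, 0 < ⨅ i, πk k i := by
    intro k
    obtain ⟨j, hj, _⟩ := exists_eq_iInf hNpos (πk k)
    rw [hj]
    exact (hmem k).1 j
  -- g tends to atBot
  have hgbot : Filter.Tendsto g Filter.atTop Filter.atBot := by
    have h1 : Filter.Tendsto (fun k => ⨅ i, πk k i) Filter.atTop (nhdsWithin 0 (Set.Ioi 0)) :=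
      tendsto_nhdsWithin_of_tendsto_nhds_of_eventually_within _ hmin
        (Filter.Eventually.of_forall hinfpos)
    have h2 : Filter.Tendsto (fun k => Real.log (⨅ i, πk k i)) Filter.atTop Filter.atBot :=
      Real.tendsto_log_nhdsGT_zero.comp h1
    have h3 := h2.const_mul_atBot hτ
    simpa [hg] using Filter.tendsto_atBot_add_const_left _ C h3
  -- pointwise bound Φ(πk k) ≤ g k
  refine Filter.tendsto_atBot_mono (fun k => ?_) hgbot
  obtain ⟨hpos, hsum⟩ := hmem k
  set π : Fin N → ℝ := πk k with hπdef
  obtain ⟨j, hjeq, hjmin⟩ := exists_eq_iInf hNpos π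
  -- inner product bound
  have hb1 : (∑ i, π i * qbar i) ≤ ∑ i, |qbar i| := by
    refine Finset.sum_le_sum (fun i _ => ?_)
    have hle1 : π i ≤ 1 := by
      rw [← hsum]
      exact Finset.single_le_sum (fun j _ => (hpos j).le) (Finset.mem_univ i)
    calc π i * qbar i ≤ |π i * qbar i| := le_abs_self _
      _ = π i * |qbar i| := by rw [abs_mul, abs_of_nonneg (hpos i).le]
      _ ≤ 1 * |qbar i| := mul_le_mul_of_nonneg_right hle1 (abs_nonneg _)
      _ = |qbar i| := one_mul _
  -- KL bound
  have hb2 : 0 ≤ KL π π₀ := KL_nonneg π π₀ hpos hsum hπ₀pos hπ₀sum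
  -- psi bound
  have hb3 : τ * Real.log m₀ - τ * Real.log (⨅ i, π i) ≤ psi τ π₀ π := by
    have hsup : -τ * Real.log (π j / π₀ j) ≤ psi τ π₀ π :=
      le_trans (le_ciSup (f := fun i => -τ * Real.log (π i / π₀ i)) (Finite.bddAbove_range _) j) (le_max_right _ _)
    have hlogdiv : Real.log (π j / π₀ j) = Real.log (π j) - Real.log (π₀ j) :=
      Real.log_div (hpos j).ne' (hπ₀pos j).ne'
    have hm₀le : m₀ ≤ π₀ j := ciInf_le (Finite.bddBelow_range _) j
    have hlog1 : Real.log m₀ ≤ Real.log (π₀ j) := by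
      apply Real.log_le_log
      · obtain ⟨j', hj', _⟩ := exists_eq_iInf hNpos π₀
        rw [hm₀, hj']; exact hπ₀pos j'
      · exact hm₀le
    have hlog2 : Real.log (⨅ i, π i) = Real.log (π j) := by rw [hjeq]
    have : τ * Real.log m₀ - τ * Real.log (⨅ i, π i)
        ≤ τ * Real.log (π₀ j) - τ * Real.log (π j) := by
      rw [hlog2]
      have := mul_le_mul_of_nonneg_left hlog1 hτ.le
      linarith
    refine this.trans ?_
    calc τ * Real.log (π₀ j) - τ * Real.log (π j)
        = -τ * Real.log (π j / π₀ j) := by rw [hlogdiv]; ring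
      _ ≤ psi τ π₀ π := hsup
  have hτKL : 0 ≤ τ * KL π π₀ := mul_nonneg hτ.le hb2
  show Phi τ π₀ qbar π ≤ g k
  unfold Phi
  have hgk : g k = (∑ i, |qbar i|) - τ * Real.log m₀ + τ * Real.log (⨅ i, π i) := rfl
  rw [hgk]
  linarith
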